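/- With α_n = 10^(2^n), the infinite product ∏_{i=1}^{∞} α_i/(α_i + 1) converges to a value strictly greater than 1/2; consequently, for all n, ∏_{i=1}^{n} α_i / ∏_{i=1}^{n} (α_i+1) > 1/2. -/

import Mathlib

open Filter

/-- `α n = 10^(2^n)`. -/
def alf (n : ℕ) : ℕ := 10 ^ (2 ^ n)

lemma alf_pos_real (i : ℕ) : (0 : ℝ) < (alf i : ℝ) := by
  have : 0 < alf i := Nat.pow_pos (by norm_num)
  exact_mod_cast this

lemma hundred_pow_le_alf (n : ℕ) : ((100 : ℝ) ^ n) ≤ (alf n : ℝ) := by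
  have h1 : 2 * n ≤ 2 ^ n := by
    rcases Nat.eq_zero_or_pos n with h | h
    · simp [h]
    · have := Nat.lt_two_pow_self (n := n - 1)
      have h2 : n ≤ 2 ^ (n - 1) := by omega
      calc 2 * n ≤ 2 * 2 ^ (n - 1) := by omega
        _ = 2 ^ (n - 1 + 1) := by ring
        _ = 2 ^ n := by congr 1; omega
  have : (100 : ℕ) ^ n ≤ alf n := by
    have : (100 : ℕ) ^ n = 10 ^ (2 * n) := by rw [pow_mul]; norm_num
    rw [this]
    exact Nat.pow_le_pow_right (by norm_num) h1
  exact_mod_cast this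

/-- partial sum bound -/
lemma sum_bound (n : ℕ) :
    ∑ i ∈ Finset.Icc 1 n, ((1 : ℝ) / 100) ^ i ≤ 1 / 99 - (1 / 99) * (1 / 100) ^ n := by
  induction n with
  | zero => simp
  | succ n ih =>
    rw [Finset.sum_Icc_succ_top (by omega)]
    have : ((1 : ℝ) / 100) ^ (n + 1) = (1 / 100) ^ n * (1 / 100) := by ring
    nlinarith [ih]

lemma prod_lower (n : ℕ) :
    1 - ∑ i ∈ Finset.Icc 1 n, ((1 : ℝ) / 100) ^ i ≤
      ∏ i ∈ Finset.Icc 1 n, ((alf i : ℝ) / ((alf i : ℝ) + 1)) := by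
  induction n with
  | zero => simp
  | succ n ih =>
    rw [Finset.sum_Icc_succ_top (by omega), Finset.prod_Icc_succ_top (by omega)]
    set a : ℝ := (alf (n + 1) : ℝ) with ha
    have hapos : (0 : ℝ) < a := alf_pos_real _
    have hf01 : a / (a + 1) ≤ 1 := by
      rw [div_le_one (by linarith)]; linarith
    have hf0 : 0 ≤ a / (a + 1) := by positivity
    have hge : 1 - ((1 : ℝ) / 100) ^ (n + 1) ≤ a / (a + 1) := by
      rw [le_div_iff₀ (by linarith)]
      have h1 : ((100 : ℝ) ^ (n + 1)) ≤ a := hundred_pow_le_alf (n + 1)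
      have h2 : ((1 : ℝ) / 100) ^ (n + 1) * (100 : ℝ) ^ (n + 1) = 1 := by
        rw [← mul_pow]; norm_num
      nlinarith [pow_pos (show (0:ℝ) < 1/100 by norm_num) (n + 1)]
    have hS0 : 0 ≤ ∑ i ∈ Finset.Icc 1 n, ((1 : ℝ) / 100) ^ i :=
      Finset.sum_nonneg fun i _ => by positivity
    set S := ∑ i ∈ Finset.Icc 1 n, ((1 : ℝ) / 100) ^ i
    have step1 : (1 - S) * (a / (a + 1)) ≤
        (∏ i ∈ Finset.Icc 1 n, ((alf i : ℝ) / ((alf i : ℝ) + 1))) * (a / (a + 1)) :=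
      mul_le_mul_of_nonneg_right ih hf0
    nlinarith [step1]

lemma prod_ge (n : ℕ) :
    (98 : ℝ) / 99 ≤ ∏ i ∈ Finset.Icc 1 n, ((alf i : ℝ) / ((alf i : ℝ) + 1)) := by
  have h1 := prod_lower n
  have h2 := sum_bound n
  have h3 : (0:ℝ) < (1/100) ^ n := by positivity
  nlinarith

/-- With `α_i = 10^(2^i)`, the infinite product `∏_{i=1}^∞ α_i/(α_i+1)` converges to a
limit strictly greater than `1/2`, and consequently all its partial products (quotients
of the partial products of numerators and denominators) are strictly greater than `1/2`. -/
theorem alf_product_gt_half :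
    (∃ L : ℝ, 1 / 2 < L ∧
      Tendsto (fun n : ℕ => ∏ i ∈ Finset.Icc 1 n, ((alf i : ℝ) / ((alf i : ℝ) + 1)))
        atTop (nhds L)) ∧
    ∀ n : ℕ, 1 / 2 <
      (∏ i ∈ Finset.Icc 1 n, (alf i : ℝ)) / (∏ i ∈ Finset.Icc 1 n, ((alf i : ℝ) + 1)) := by
  set P : ℕ → ℝ := fun n => ∏ i ∈ Finset.Icc 1 n, ((alf i : ℝ) / ((alf i : ℝ) + 1)) with hP
  have hanti : Antitone P := by
    apply antitone_nat_of_succ_le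
    intro n
    have hapos : (0 : ℝ) < (alf (n + 1) : ℝ) := alf_pos_real _
    have hf01 : (alf (n + 1) : ℝ) / ((alf (n + 1) : ℝ) + 1) ≤ 1 := by
      rw [div_le_one (by linarith)]; linarith
    have hP0 : 0 ≤ P n := Finset.prod_nonneg fun i _ => by positivity
    calc P (n + 1) = P n * ((alf (n + 1) : ℝ) / ((alf (n + 1) : ℝ) + 1)) := by
          simp only [hP]; rw [Finset.prod_Icc_succ_top (by omega)]
      _ ≤ P n * 1 := mul_le_mul_of_nonneg_left hf01 hP0
      _ = P n := mul_one _
  have hbdd : BddBelow (Set.range P) := ⟨98 / 99, by rintro x ⟨n, rfl⟩; exact prod_ge n⟩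
  constructor
  · refine ⟨⨅ n, P n, ?_, tendsto_atTop_ciInf hanti hbdd⟩
    have : (98 : ℝ) / 99 ≤ ⨅ n, P n := le_ciInf fun n => prod_ge n
    linarith
  · intro n
    have heq : (∏ i ∈ Finset.Icc 1 n, (alf i : ℝ)) /
        (∏ i ∈ Finset.Icc 1 n, ((alf i : ℝ) + 1)) = P n := by
      simp [hP, Finset.prod_div_distrib]
    rw [heq]
    have := prod_ge n
    linarith
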